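/- Let n ≥ 1, d = 2^n. Let X be a Hermitian d×d complex matrix, let c : 𝒫ₙ → ℝ be coefficients with |c(P)| ≤ c₀ for all P ∈ 𝒫ₙ, and let φ ∈ ℂ^d be a unit vector. Then | ⟨φ| Σ_{P∈𝒫ₙ} c(P) · P X P |φ⟩ | ≤ c₀ · d · ‖X‖₁, where ‖X‖₁ = tr√(X†X) is the Schatten 1-norm (trace norm). -/

import Mathlib

open scoped Classical Matrix ComplexOrder

/-- The four single-qubit Pauli matrices `I, X, Y, Z`. -/
noncomputable def pauli1 : Fin 4 → Matrix (Fin 2) (Fin 2) ℂ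
  | 0 => !![1, 0; 0, 1]
  | 1 => !![0, 1; 1, 0]
  | 2 => !![0, -Complex.I; Complex.I, 0]
  | 3 => !![1, 0; 0, -1]

/-- The `n`-qubit Pauli operator `P_{f 0} ⊗ ⋯ ⊗ P_{f (n-1)}`, as a matrix indexed by
`Fin n → Fin 2` (a type of cardinality `d = 2^n`). -/
noncomputable def PauliOp (n : ℕ) (f : Fin n → Fin 4) :
    Matrix (Fin n → Fin 2) (Fin n → Fin 2) ℂ :=
  Matrix.of fun s t => ∏ i, pauli1 (f i) (s i) (t i)
/-- The Schatten 1-norm (trace norm) `‖X‖₁ = tr √(XᴴX)`. -/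
noncomputable def traceNorm {m : Type*} [Fintype m] [DecidableEq m] (X : Matrix m m ℂ) : ℝ :=
  (((Matrix.posSemidef_conjTranspose_mul_self X).1.eigenvectorUnitary : Matrix m m ℂ) *
      Matrix.diagonal (((↑) : ℝ → ℂ) ∘ Real.sqrt ∘ (Matrix.posSemidef_conjTranspose_mul_self X).1.eigenvalues) *
      star ((Matrix.posSemidef_conjTranspose_mul_self X).1.eigenvectorUnitary : Matrix m m ℂ)).trace.re

lemma pauli1_sum (a b c d : Fin 2) :
    ∑ k : Fin 4, pauli1 k a b * pauli1 k c d = if a = d ∧ b = c then 2 else 0 := by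
  fin_cases a <;> fin_cases b <;> fin_cases c <;> fin_cases d <;>
    simp [pauli1, Fin.sum_univ_four, Complex.ext_iff] <;> norm_num

lemma pauli1_conj (k : Fin 4) (a b : Fin 2) :
    (starRingEnd ℂ) (pauli1 k a b) = pauli1 k b a := by
  fin_cases k <;> fin_cases a <;> fin_cases b <;> simp [pauli1]

lemma PauliOp_conj (n : ℕ) (f : Fin n → Fin 4) (s t : Fin n → Fin 2) :
    (starRingEnd ℂ) (PauliOp n f s t) = PauliOp n f t s := by
  simp [PauliOp, map_prod, pauli1_conj]

lemma PauliOp_herm (n : ℕ) (f : Fin n → Fin 4) : (PauliOp n f)ᴴ = PauliOp n f := by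
  ext s t; simp [Matrix.conjTranspose_apply, PauliOp_conj]

lemma twirl_scalar (n : ℕ) (s u v t : Fin n → Fin 2) :
    ∑ f : Fin n → Fin 4, PauliOp n f s u * PauliOp n f v t
      = if s = t ∧ u = v then (2 : ℂ) ^ n else 0 := by
  have h1 : ∀ f : Fin n → Fin 4, PauliOp n f s u * PauliOp n f v t
      = ∏ i, (pauli1 (f i) (s i) (u i) * pauli1 (f i) (v i) (t i)) := by
    intro f; simp [PauliOp, Finset.prod_mul_distrib]
  simp_rw [h1]
  rw [← Fintype.prod_sum (fun i (k : Fin 4) => pauli1 k (s i) (u i) * pauli1 k (v i) (t i))]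
  simp_rw [pauli1_sum]
  by_cases h : s = t ∧ u = v
  · rw [if_pos h]
    have : ∀ i, ((if s i = t i ∧ u i = v i then (2:ℂ) else 0)) = 2 := by
      intro i; rw [if_pos ⟨congrFun h.1 i, congrFun h.2 i⟩]
    simp [this]
  · rw [if_neg h]
    have : ∃ i, ¬(s i = t i ∧ u i = v i) := by
      by_contra hc
      push_neg at hc
      exact h ⟨funext fun i => (hc i).1, funext fun i => (hc i).2⟩
    obtain ⟨i, hi⟩ := this
    exact Finset.prod_eq_zero (Finset.mem_univ i) (if_neg hi)

lemma twirl (n : ℕ) (A : Matrix (Fin n → Fin 2) (Fin n → Fin 2) ℂ) :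
    ∑ f : Fin n → Fin 4, PauliOp n f * A * PauliOp n f = ((2:ℂ) ^ n * A.trace) • 1 := by
  ext s t
  have h1 : ∀ f : Fin n → Fin 4, (PauliOp n f * A * PauliOp n f) s t
      = ∑ u, ∑ v, A u v * (PauliOp n f s u * PauliOp n f v t) := by
    intro f
    simp only [Matrix.mul_apply, Finset.sum_mul]
    rw [Finset.sum_comm]
    exact Finset.sum_congr rfl fun u _ => Finset.sum_congr rfl fun v _ => by ring
  rw [Matrix.sum_apply]
  simp_rw [h1]
  rw [Finset.sum_comm]
  have h2 : ∀ u, ∑ f : Fin n → Fin 4, ∑ v, A u v * (PauliOp n f s u * PauliOp n f v t)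
      = ∑ v, A u v * (if s = t ∧ u = v then (2:ℂ)^n else 0) := by
    intro u
    rw [Finset.sum_comm]
    exact Finset.sum_congr rfl fun v _ => by rw [← Finset.mul_sum, twirl_scalar]
  simp_rw [h2, mul_ite, mul_zero]
  by_cases hst : s = t
  · simp [hst, Matrix.one_apply, Matrix.trace, Matrix.diag, Finset.mul_sum, Finset.sum_ite_eq, mul_comm]
  · simp [hst, Matrix.one_apply_ne hst]

lemma vmv_mulVec {m : Type*} [Fintype m] (a b x : m → ℂ) :
    Matrix.vecMulVec a b *ᵥ x = (b ⬝ᵥ x) • a := by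
  ext i
  simp only [Matrix.mulVec, Matrix.vecMulVec_apply, dotProduct, Pi.smul_apply,
    smul_eq_mul, Finset.sum_mul]
  exact Finset.sum_congr rfl fun j _ => by ring

lemma trace_vmv {m : Type*} [Fintype m] (a : m → ℂ) :
    (Matrix.vecMulVec a (star a)).trace = star a ⬝ᵥ a := by
  simp [Matrix.trace, Matrix.diag, Matrix.vecMulVec_apply, dotProduct, mul_comm]

lemma dp_sum {m ι : Type*} [Fintype m] [Fintype ι] (v : m → ℂ) (y : ι → m → ℂ) :
    v ⬝ᵥ (∑ i, y i) = ∑ i, v ⬝ᵥ y i := by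
  simp only [dotProduct, Finset.sum_apply, Finset.mul_sum]
  rw [Finset.sum_comm]

lemma sum_mv {m ι : Type*} [Fintype m] [Fintype ι] (A : ι → Matrix m m ℂ) (w : m → ℂ) :
    (∑ i, A i) *ᵥ w = ∑ i, A i *ᵥ w := by
  ext j
  simp only [Matrix.mulVec, dotProduct, Matrix.sum_apply, Finset.sum_apply,
    Finset.sum_mul]
  rw [Finset.sum_comm]

lemma key_sum (n : ℕ) (w φ : (Fin n → Fin 2) → ℂ) :
    ∑ f : Fin n → Fin 4,
        (star w ⬝ᵥ (PauliOp n f *ᵥ φ)) * (star φ ⬝ᵥ (PauliOp n f *ᵥ w))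
      = (2:ℂ)^n * (star φ ⬝ᵥ φ) * (star w ⬝ᵥ w) := by
  have key : ∀ f : Fin n → Fin 4,
      (star w ⬝ᵥ (PauliOp n f *ᵥ φ)) * (star φ ⬝ᵥ (PauliOp n f *ᵥ w))
      = star w ⬝ᵥ ((PauliOp n f * Matrix.vecMulVec φ (star φ) * PauliOp n f) *ᵥ w) := by
    intro f
    rw [← Matrix.mulVec_mulVec, ← Matrix.mulVec_mulVec, vmv_mulVec,
      Matrix.mulVec_smul, dotProduct_smul]
    simp only [smul_eq_mul]
    ring
  simp_rw [key]
  rw [← dp_sum, ← sum_mv, twirl, trace_vmv,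
    Matrix.smul_mulVec, Matrix.one_mulVec, dotProduct_smul]
  simp only [smul_eq_mul]

open scoped MatrixOrder in
lemma traceNorm_hermitian {m : Type*} [Fintype m] [DecidableEq m]
    (X : Matrix m m ℂ) (hX : X.IsHermitian) :
    traceNorm X = ∑ i, |hX.eigenvalues i| := by
  set U : Matrix m m ℂ := (Matrix.IsHermitian.eigenvectorUnitary hX : Matrix m m ℂ) with hU
  have hUU' : star U * U = 1 := (Matrix.mem_unitaryGroup_iff').mp
    (Matrix.IsHermitian.eigenvectorUnitary hX).2
  set D : Matrix m m ℂ :=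
    Matrix.diagonal (fun i => Complex.ofReal |hX.eigenvalues i|) with hD
  have hpsd : Matrix.PosSemidef (U * D * star U) := by
    have : Matrix.PosSemidef D := Matrix.posSemidef_diagonal_iff.mpr fun i => by
      rw [Complex.zero_le_real]; exact abs_nonneg _
    simpa [Matrix.star_eq_conjTranspose] using this.mul_mul_conjTranspose_same U
  have hsq : (U * D * star U) ^ 2 = Xᴴ * X := by
    have hX2 : Xᴴ * X = U * (Matrix.diagonal (RCLike.ofReal ∘ hX.eigenvalues) *
        (Matrix.diagonal (RCLike.ofReal ∘ hX.eigenvalues) * star U)) := by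
      rw [hX.eq]
      conv_lhs => rw [hX.spectral_theorem, Unitary.conjStarAlgAut_apply]
      simp only [Unitary.coe_star, ← hU, Matrix.mul_assoc]
      rw [← Matrix.mul_assoc (star U) U, hUU', Matrix.one_mul]
    rw [hX2, pow_two]
    simp only [Matrix.mul_assoc]
    rw [← Matrix.mul_assoc (star U) U, hUU', Matrix.one_mul]
    congr 1
    rw [← Matrix.mul_assoc, ← Matrix.mul_assoc, Matrix.diagonal_mul_diagonal]
    rw [show (Matrix.diagonal (RCLike.ofReal ∘ hX.eigenvalues) *
        Matrix.diagonal (RCLike.ofReal ∘ hX.eigenvalues) : Matrix m m ℂ)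
        = Matrix.diagonal (fun i => (RCLike.ofReal ∘ hX.eigenvalues) i *
            (RCLike.ofReal ∘ hX.eigenvalues) i) from Matrix.diagonal_mul_diagonal _ _]
    congr 1
    funext i
    simp [← Complex.ofReal_mul, abs_mul_abs_self]
  have heq : U * D * star U = CFC.sqrt (Xᴴ * X) :=
    (CFC.sqrt_unique (by rw [← pow_two]; exact hsq) hpsd.nonneg).symm
  have hcfc : CFC.sqrt (Xᴴ * X) = (Matrix.posSemidef_conjTranspose_mul_self X).1.cfc Real.sqrt := by
    rw [CFC.sqrt_eq_real_sqrt _ (Matrix.posSemidef_conjTranspose_mul_self X).nonneg,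
      cfcₙ_eq_cfc, Matrix.IsHermitian.cfc_eq]
  have htn : traceNorm X
      = ((Matrix.posSemidef_conjTranspose_mul_self X).1.cfc Real.sqrt).trace.re := rfl
  rw [htn, ← hcfc, ← heq, Matrix.trace_mul_cycle, hUU', Matrix.one_mul, hD,
    Matrix.trace_diagonal, ← Complex.ofReal_sum, Complex.ofReal_re]

lemma conj_dp (n : ℕ) (f : Fin n → Fin 4) (w φ : (Fin n → Fin 2) → ℂ) :
    star (star w ⬝ᵥ (PauliOp n f *ᵥ φ)) = star φ ⬝ᵥ (PauliOp n f *ᵥ w) := by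
  rw [← Matrix.star_dotProduct_star, star_star, Matrix.star_mulVec, PauliOp_herm,
    ← Matrix.dotProduct_mulVec]

lemma sum_normSq (n : ℕ) (w φ : (Fin n → Fin 2) → ℂ)
    (hw : star w ⬝ᵥ w = 1) (hφ : star φ ⬝ᵥ φ = 1) :
    ∑ f : Fin n → Fin 4, Complex.normSq (star w ⬝ᵥ (PauliOp n f *ᵥ φ)) = 2 ^ n := by
  have hks := key_sum n w φ
  rw [hw, hφ, mul_one, mul_one] at hks
  have h2 : ∀ f : Fin n → Fin 4,
      (star w ⬝ᵥ (PauliOp n f *ᵥ φ)) * (star φ ⬝ᵥ (PauliOp n f *ᵥ w))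
        = (Complex.normSq (star w ⬝ᵥ (PauliOp n f *ᵥ φ)) : ℂ) := by
    intro f
    rw [← conj_dp n f w φ, RCLike.star_def, Complex.mul_conj]
  rw [Finset.sum_congr rfl fun f _ => h2 f, ← Complex.ofReal_sum] at hks
  exact_mod_cast hks

/-- for Hermitian `X`, coefficients `|c(P)| ≤ c₀` and a unit vector `φ`,
`|⟨φ| ∑_P c(P) P X P |φ⟩| ≤ c₀ · d · ‖X‖₁`. -/
theorem stmt_3 (n : ℕ) (hn : 1 ≤ n)
    (X : Matrix (Fin n → Fin 2) (Fin n → Fin 2) ℂ) (hX : X.IsHermitian)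
    (c : (Fin n → Fin 4) → ℝ) (c₀ : ℝ) (hc : ∀ P, |c P| ≤ c₀)
    (φ : (Fin n → Fin 2) → ℂ) (hφ : star φ ⬝ᵥ φ = 1) :
    ‖star φ ⬝ᵥ
        (∑ P : Fin n → Fin 4, (c P : ℂ) • (PauliOp n P * X * PauliOp n P)).mulVec φ‖
      ≤ c₀ * 2 ^ n * traceNorm X := by
  classical
  set U : Matrix (Fin n → Fin 2) (Fin n → Fin 2) ℂ :=
    (Matrix.IsHermitian.eigenvectorUnitary hX : Matrix (Fin n → Fin 2) (Fin n → Fin 2) ℂ)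
    with hU
  set μ := hX.eigenvalues with hμ
  have hUU' : star U * U = 1 := (Matrix.mem_unitaryGroup_iff').mp
    (Matrix.IsHermitian.eigenvectorUnitary hX).2
  set w : (Fin n → Fin 2) → (Fin n → Fin 2) → ℂ := fun i u => U u i with hw
  have hw1 : ∀ i, star (w i) ⬝ᵥ w i = 1 := by
    intro i
    have h := congrFun (congrFun hUU' i) i
    simpa [Matrix.mul_apply, Matrix.one_apply, dotProduct, Matrix.star_apply,
      hw] using h
  -- the quadratic form of X
  have quad : ∀ ψ : (Fin n → Fin 2) → ℂ, star ψ ⬝ᵥ X *ᵥ ψ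
      = ∑ i, (μ i : ℂ) * ((star (w i) ⬝ᵥ ψ) * star (star (w i) ⬝ᵥ ψ)) := by
    intro ψ
    have hXdec : X = U * (Matrix.diagonal (RCLike.ofReal ∘ μ) * star U) := by
      conv_lhs => rw [hX.spectral_theorem, Unitary.conjStarAlgAut_apply]
      rw [Matrix.mul_assoc]
    have hy : ∀ i, (star U *ᵥ ψ) i = star (w i) ⬝ᵥ ψ := by
      intro i
      simp [Matrix.mulVec, dotProduct, Matrix.star_apply, hw]
    conv_lhs => rw [hXdec, ← Matrix.mulVec_mulVec, ← Matrix.mulVec_mulVec]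
    rw [Matrix.dotProduct_mulVec]
    have hsφ : star ψ ᵥ* U = star (star U *ᵥ ψ) := by
      rw [Matrix.star_mulVec, Matrix.star_eq_conjTranspose, Matrix.conjTranspose_conjTranspose]
    have hdiag : ∀ y : (Fin n → Fin 2) → ℂ,
        star y ⬝ᵥ (Matrix.diagonal (RCLike.ofReal ∘ μ) *ᵥ y)
          = ∑ i, (μ i : ℂ) * (y i * star (y i)) := by
      intro y
      simp only [dotProduct, Matrix.mulVec_diagonal, Pi.star_apply,
        Function.comp_apply, RCLike.ofReal_real_eq_id, id_eq]
      exact Finset.sum_congr rfl fun i _ =>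
        (mul_left_comm _ _ _).trans (by rw [mul_comm (star (y i)) (y i)]; exact rfl)
    rw [hsφ, hdiag]
    exact Finset.sum_congr rfl fun i _ => by rw [hy]
  -- step 1: expand the big dot product
  have step1 : star φ ⬝ᵥ
        (∑ P : Fin n → Fin 4, (c P : ℂ) • (PauliOp n P * X * PauliOp n P)).mulVec φ
      = ∑ P : Fin n → Fin 4, (c P : ℂ) *
          (star (PauliOp n P *ᵥ φ) ⬝ᵥ X *ᵥ (PauliOp n P *ᵥ φ)) := by
    rw [show (∑ P : Fin n → Fin 4, (c P : ℂ) • (PauliOp n P * X * PauliOp n P)).mulVec φ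
        = ∑ P : Fin n → Fin 4, ((c P : ℂ) • (PauliOp n P * X * PauliOp n P)) *ᵥ φ from
      sum_mv _ _, dp_sum]
    refine Finset.sum_congr rfl fun P _ => ?_
    rw [Matrix.smul_mulVec, dotProduct_smul, smul_eq_mul]
    congr 1
    rw [← Matrix.mulVec_mulVec, ← Matrix.mulVec_mulVec, Matrix.dotProduct_mulVec]
    congr 1
    rw [Matrix.star_mulVec, PauliOp_herm]
  -- rewrite as a real number
  set z : (Fin n → Fin 4) → (Fin n → Fin 2) → ℂ :=
    fun P i => star (w i) ⬝ᵥ (PauliOp n P *ᵥ φ) with hz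
  set r : ℝ := ∑ P : Fin n → Fin 4, c P * ∑ i, μ i * Complex.normSq (z P i) with hr
  have hreal : star φ ⬝ᵥ
        (∑ P : Fin n → Fin 4, (c P : ℂ) • (PauliOp n P * X * PauliOp n P)).mulVec φ
      = (r : ℂ) := by
    rw [step1, hr]
    push_cast
    refine Finset.sum_congr rfl fun P _ => ?_
    rw [quad]
    congr 1
    refine Finset.sum_congr rfl fun i _ => ?_
    rw [RCLike.star_def, Complex.mul_conj, hz]
  rw [hreal, Complex.norm_real, Real.norm_eq_abs]
  -- now the real estimate
  have hc₀ : 0 ≤ c₀ := le_trans (abs_nonneg _) (hc (fun _ => 0))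
  have habs : |r| ≤ ∑ P : Fin n → Fin 4, ∑ i, c₀ * (|μ i| * Complex.normSq (z P i)) := by
    refine le_trans (Finset.abs_sum_le_sum_abs _ _) (Finset.sum_le_sum fun P _ => ?_)
    rw [abs_mul]
    calc |c P| * |∑ i, μ i * Complex.normSq (z P i)|
        ≤ c₀ * ∑ i, |μ i * Complex.normSq (z P i)| := by
          apply mul_le_mul (hc P) (Finset.abs_sum_le_sum_abs _ _) (abs_nonneg _) hc₀
      _ = ∑ i, c₀ * (|μ i| * Complex.normSq (z P i)) := by
          rw [Finset.mul_sum]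
          refine Finset.sum_congr rfl fun i _ => ?_
          rw [abs_mul, abs_of_nonneg (Complex.normSq_nonneg _)]
  have hsum : ∑ P : Fin n → Fin 4, ∑ i, c₀ * (|μ i| * Complex.normSq (z P i))
      = c₀ * 2 ^ n * ∑ i, |μ i| := by
    rw [Finset.sum_comm]
    have : ∀ i, ∑ P : Fin n → Fin 4, c₀ * (|μ i| * Complex.normSq (z P i))
        = c₀ * |μ i| * 2 ^ n := by
      intro i
      rw [← Finset.mul_sum, ← Finset.mul_sum, sum_normSq n (w i) φ (hw1 i) hφ]
      ring
    simp_rw [this]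
    rw [← Finset.sum_mul, ← Finset.mul_sum]
    ring
  rw [traceNorm_hermitian X hX]
  calc |r| ≤ _ := habs
    _ = c₀ * 2 ^ n * ∑ i, |μ i| := hsum
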